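/- Let G = H *_F K be a free product of groups H and K amalgamated over a subgroup F of both. Let S_H be a symmetric generating set of H containing every element of the copy of F in H, let S_K be a symmetric generating set of K containing every element of the copy of F in K, and set S_G = S_H ∪ S_K. Then the inclusion H → G is an isometric embedding: for all h₁, h₂ ∈ H, d_{S_H}(h₁,h₂) = d_{S_G}(h₁,h₂). -/

import Mathlib

/-- The word metric on `G` with respect to a generating set `S`. -/
noncomputable def wordDist {G : Type*} [Group G] (S : Set G) (g h : G) : ℕ :=
  sInf {k : ℕ | ∃ l : List G, l.length = k ∧ (∀ x ∈ l, x ∈ S) ∧ l.prod = g⁻¹ * h}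

open Monoid PushoutI

section Aux

variable {F : Type*} [Group F] {Hfam : Bool → Type*} [∀ i, Group (Hfam i)]

/-- The pair of generating sets as a family. -/
def Sfam (SH : Set (Hfam true)) (SK : Set (Hfam false)) : ∀ b : Bool, Set (Hfam b) :=
  fun b => match b with
  | true => SH
  | false => SK

@[simp] lemma Sfam_true (SH : Set (Hfam true)) (SK : Set (Hfam false)) :
    Sfam SH SK true = SH := rfl

@[simp] lemma Sfam_false (SH : Set (Hfam true)) (SK : Set (Hfam false)) :
    Sfam SH SK false = SK := rfl

variable (φ : ∀ i, F →* Hfam i)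

/-- A list of `n` elements of `Hfam b` whose product is `φ b f` (provided `n = 0 → f = 1`). -/
def convList (b : Bool) (f : F) (n : ℕ) : List (Hfam b) :=
  match n with
  | 0 => []
  | (m+1) => φ b f :: List.replicate m 1

@[simp] lemma convList_length (b : Bool) (f : F) (n : ℕ) :
    (convList φ b f n).length = n := by
  cases n <;> simp [convList]

lemma convList_prod (b : Bool) (f : F) (n : ℕ) (h0 : n = 0 → f = 1) :
    (convList φ b f n).prod = φ b f := by
  cases n with
  | zero => simp [convList, h0 rfl]
  | succ m => simp [convList, List.prod_replicate]

lemma convList_mem {S : Set (Hfam b)} (hS : Set.range (φ b) ⊆ S) (f : F) (n : ℕ) :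
    ∀ g ∈ convList φ b f n, g ∈ S := by
  intro g hg
  cases n with
  | zero => simp [convList] at hg
  | succ m =>
    simp only [convList, List.mem_cons, List.eq_of_mem_replicate] at hg
    rcases hg with rfl | hg
    · exact hS ⟨f, rfl⟩
    · have : g = 1 := List.eq_of_mem_replicate hg
      subst this
      exact hS ⟨1, map_one _⟩

/-- Splitting lemma: either a list is a chain, or it has an adjacent bad pair. -/
lemma find_split {α : Type*} (R : α → α → Prop) :
    ∀ l : List α, List.Chain' R l ∨ ∃ a u v b, ¬ R u v ∧ l = a ++ u :: v :: b := by
  classical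
  intro l
  induction l with
  | nil => exact Or.inl List.isChain_nil
  | cons x t ih =>
    cases t with
    | nil => exact Or.inl (List.isChain_singleton x)
    | cons y s =>
      by_cases hR : R x y
      · rcases ih with h | ⟨a, u, v, b, h1, h2⟩
        · exact Or.inl (List.isChain_cons_cons.2 ⟨hR, h⟩)
        · exact Or.inr ⟨x :: a, u, v, b, h1, by rw [h2]; rfl⟩
      · exact Or.inr ⟨[], x, y, s, hR, rfl⟩

variable {φ}

/-- The reduced word theorem applied: an alternating word of non-`F` runs starting with a
`false` run cannot be in the image of `Hfam true`. -/
lemma noway (hφ : ∀ i, Function.Injective (φ i))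
    (r : List ((b : Bool) × List (Hfam b))) (x : Hfam true)
    (hne : r ≠ [])
    (hhead : ∀ u ∈ r.head?, u.1 = false)
    (hchain : List.Chain' (fun u v => u.1 ≠ v.1) r)
    (hred : ∀ u ∈ r, u.2.prod ∉ (φ u.1).range)
    (heq : (r.map fun u => of (φ := φ) u.1 u.2.prod).prod = of (φ := φ) true x) :
    False := by
  classical
  have hprodM : ∀ (M : List ((b : Bool) × Hfam b)),
      ofCoprodI (φ := φ) (M.map fun l => CoprodI.of l.2).prod
        = (M.map fun l => of (φ := φ) l.1 l.2).prod := by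
    intro M
    rw [map_list_prod, List.map_map]
    congr 1
  have hL : ∀ (L : List ((b : Bool) × Hfam b)),
      (∀ l ∈ L, l.2 ≠ 1) → L.Chain' (fun l l' => l.1 ≠ l'.1) →
      (∀ l ∈ L, l.2 ∉ (φ l.1).range) →
      ofCoprodI (φ := φ) (L.map fun l => CoprodI.of l.2).prod ∈ (base φ).range →
      L = [] := by
    intro L hne1 hch hrd hmem
    have : (⟨L, hne1, hch⟩ : CoprodI.Word Hfam) = CoprodI.Word.empty :=
      Reduced.eq_empty_of_mem_range hφ hrd hmem
    exact congrArg CoprodI.Word.toList this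
  by_cases hx : x ∈ (φ true).range
  · -- product is in base range, use `r` itself
    rcases hx with ⟨f, hf⟩
    refine hne ?_
    have hLnil : (r.map (fun u => (⟨u.1, u.2.prod⟩ : (b : Bool) × Hfam b))) = [] := by
      refine hL _ ?_ ?_ ?_ ?_
      · rintro l hl hl1
        rw [List.mem_map] at hl
        rcases hl with ⟨u, hu, rfl⟩
        refine hred u hu ?_
        have : u.2.prod = 1 := hl1
        rw [this]; exact one_mem _
      · change List.IsChain _ _; rw [List.isChain_map]; exact hchain
      · rintro l hl
        rw [List.mem_map] at hl
        rcases hl with ⟨u, hu, rfl⟩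
        exact hred u hu
      · rw [hprodM, List.map_map]
        have h2 : (r.map ((fun l => of (φ := φ) l.1 l.2) ∘
            fun u => (⟨u.1, u.2.prod⟩ : (b : Bool) × Hfam b))).prod
            = of (φ := φ) true x := heq
        rw [h2, ← hf, of_apply_eq_base]
        exact ⟨f, rfl⟩
    exact List.map_eq_nil_iff.mp hLnil
  · -- prepend `x⁻¹`
    have hxinv : x⁻¹ ∉ (φ true).range := fun h => hx (inv_mem_iff.mp h)
    have hLnil : ((⟨true, x⁻¹⟩ : (b : Bool) × Hfam b) ::
        r.map (fun u => (⟨u.1, u.2.prod⟩ : (b : Bool) × Hfam b))) = [] := by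
      refine hL _ ?_ ?_ ?_ ?_
      · rintro l hl
        rcases List.mem_cons.mp hl with rfl | hl
        · intro h1
          refine hxinv ?_
          have : x⁻¹ = 1 := h1
          rw [this]; exact one_mem _
        · rw [List.mem_map] at hl
          rcases hl with ⟨u, hu, rfl⟩
          intro h1
          refine hred u hu ?_
          have : u.2.prod = 1 := h1
          rw [this]; exact one_mem _
      · change List.IsChain _ _; rw [List.isChain_cons]
        constructor
        · intro v hv
          rcases r with _ | ⟨u, t⟩
          · simp at hv
          · have hv' : v = ⟨u.1, u.2.prod⟩ := by
              simpa using hv.symm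
            have hu : u.1 = false := hhead u rfl
            rw [hv']
            simp [hu]
        · rw [List.isChain_map]; exact hchain
      · rintro l hl
        rcases List.mem_cons.mp hl with rfl | hl
        · exact hxinv
        · rw [List.mem_map] at hl
          rcases hl with ⟨u, hu, rfl⟩
          exact hred u hu
      · rw [List.map_cons, List.prod_cons, map_mul, hprodM, List.map_map]
        have h2 : (r.map ((fun l => of (φ := φ) l.1 l.2) ∘
            fun u => (⟨u.1, u.2.prod⟩ : (b : Bool) × Hfam b))).prod
            = of (φ := φ) true x := heq
        rw [h2]
        have : ofCoprodI (φ := φ) (CoprodI.of (x⁻¹ : Hfam true)) = of (φ := φ) true x⁻¹ :=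
          ofCoprodI_of true x⁻¹
        rw [this]
        simp only [map_inv, inv_mul_cancel]
        exact ⟨1, by simp⟩
    simp at hLnil


lemma merge_facts (a b : List ((b : Bool) × List (Hfam b))) (u v w : (b : Bool) × List (Hfam b))
    (h1 : of (φ := φ) w.1 w.2.prod = of (φ := φ) u.1 u.2.prod * of (φ := φ) v.1 v.2.prod)
    (h2 : w.2.length = u.2.length + v.2.length) :
    ((a ++ w :: b).map fun u => of (φ := φ) u.1 u.2.prod).prod
      = ((a ++ u :: v :: b).map fun u => of (φ := φ) u.1 u.2.prod).prod ∧
    ((a ++ w :: b).map fun u => u.2.length).sum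
      = ((a ++ u :: v :: b).map fun u => u.2.length).sum := by
  constructor
  · simp only [List.map_append, List.prod_append, List.map_cons, List.prod_cons, h1, mul_assoc]
  · simp only [List.map_append, List.sum_append, List.map_cons, List.sum_cons, h2]
    omega

lemma merge_apply (SH : Set (Hfam true)) (SK : Set (Hfam false)) (n : ℕ)
    (ih : ∀ (r : List ((b : Bool) × List (Hfam b))) (x : Hfam true), r.length ≤ n →
      (∀ u ∈ r, ∀ g ∈ u.2, g ∈ Sfam SH SK u.1) →
      (r.map fun u => of (φ := φ) u.1 u.2.prod).prod = of (φ := φ) true x →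
      ∃ l' : List (Hfam true), l'.length = (r.map fun u => u.2.length).sum ∧
        (∀ g ∈ l', g ∈ SH) ∧ l'.prod = x)
    (r : List ((b : Bool) × List (Hfam b))) (x : Hfam true)
    (hlen : r.length ≤ n + 1)
    (hmem : ∀ u ∈ r, ∀ g ∈ u.2, g ∈ Sfam SH SK u.1)
    (heq : (r.map fun u => of (φ := φ) u.1 u.2.prod).prod = of (φ := φ) true x)
    (a bb : List ((b : Bool) × List (Hfam b))) (u v w : (b : Bool) × List (Hfam b))
    (hst : r = a ++ u :: v :: bb)
    (h1 : of (φ := φ) w.1 w.2.prod = of (φ := φ) u.1 u.2.prod * of (φ := φ) v.1 v.2.prod)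
    (h2 : w.2.length = u.2.length + v.2.length)
    (h3 : ∀ g ∈ w.2, g ∈ Sfam SH SK w.1) :
    ∃ l' : List (Hfam true), l'.length = (r.map fun u => u.2.length).sum ∧
        (∀ g ∈ l', g ∈ SH) ∧ l'.prod = x := by
  subst hst
  obtain ⟨hp, hs⟩ := merge_facts a bb u v w h1 h2
  obtain ⟨l', hl1, hl2, hl3⟩ := ih (a ++ w :: bb) x
    (by simp only [List.length_append, List.length_cons] at hlen ⊢; omega)
    (by
      intro u' hu'
      rcases List.mem_append.mp hu' with h | h
      · exact hmem u' (List.mem_append_left _ h)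
      · rcases List.mem_cons.mp h with rfl | h
        · exact h3
        · exact hmem u' (List.mem_append_right _
            (List.mem_cons_of_mem _ (List.mem_cons_of_mem _ h))))
    (by rw [hp]; exact heq)
  exact ⟨l', by rw [hl1, hs], hl2, hl3⟩

lemma key (SH : Set (Hfam true)) (SK : Set (Hfam false))
    (hφ : ∀ i, Function.Injective (φ i))
    (hSHF : Set.range (φ true) ⊆ SH) (hSKF : Set.range (φ false) ⊆ SK) :
    ∀ (n : ℕ) (r : List ((b : Bool) × List (Hfam b))) (x : Hfam true), r.length ≤ n →
      (∀ u ∈ r, ∀ g ∈ u.2, g ∈ Sfam SH SK u.1) →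
      (r.map fun u => of (φ := φ) u.1 u.2.prod).prod = of (φ := φ) true x →
      ∃ l' : List (Hfam true), l'.length = (r.map fun u => u.2.length).sum ∧
        (∀ g ∈ l', g ∈ SH) ∧ l'.prod = x := by
  have hSf : ∀ b : Bool, Set.range (φ b) ⊆ Sfam SH SK b := by
    intro b; cases b
    · exact hSKF
    · exact hSHF
  intro n
  induction n with
  | zero =>
    intro r x hlen _ heq
    have hr : r = [] := List.length_eq_zero_iff.mp (Nat.le_zero.mp hlen)
    subst hr
    simp only [List.map_nil, List.prod_nil] at heq
    have hx : (1 : Hfam true) = x := of_injective hφ true (by simpa using heq)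
    exact ⟨[], by simp, by simp, by simp [← hx]⟩
  | succ n ih =>
    intro r x hlen hmem heq
    rcases hr : r with _ | ⟨⟨b, gs⟩, rest⟩
    · subst hr
      simp only [List.map_nil, List.prod_nil] at heq
      have hx : (1 : Hfam true) = x := of_injective hφ true (by simpa using heq)
      exact ⟨[], by simp, by simp, by simp [← hx]⟩
    subst hr
    cases b with
    | true =>
      -- peel the first run
      rw [List.map_cons, List.prod_cons] at heq
      have heq' : (rest.map fun u => of (φ := φ) u.1 u.2.prod).prod
          = of (φ := φ) true (gs.prod⁻¹ * x) := by
        rw [map_mul, map_inv, ← heq, inv_mul_cancel_left]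
      obtain ⟨l'', hlen'', hmem'', hprod''⟩ := ih rest (gs.prod⁻¹ * x)
        (by simpa using Nat.lt_succ_iff.mp (Nat.lt_of_lt_of_le (Nat.lt_succ_self _) hlen))
        (fun u hu => hmem u (List.mem_cons_of_mem _ hu)) heq'
      refine ⟨gs ++ l'', by simp [hlen''], ?_, ?_⟩
      · intro g hg
        rcases List.mem_append.mp hg with h | h
        · exact hmem ⟨true, gs⟩ (List.mem_cons_self) g h
        · exact hmem'' g h
      · rw [List.prod_append, hprod'', mul_inv_cancel_left]
    | false =>
      by_cases hrange : ∃ u ∈ ((⟨false, gs⟩ : (b : Bool) × List (Hfam b)) :: rest),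
          u.2.prod ∈ (φ u.1).range
      · obtain ⟨u, hu, f, hf⟩ := hrange
        obtain ⟨s, t, hst⟩ := List.append_of_mem hu
        have h0 : u.2.length = 0 → f = 1 := by
          intro h
          have h' : u.2 = [] := List.length_eq_zero_iff.mp h
          apply hφ u.1
          rw [hf, h']
          simp
        have hbase : of (φ := φ) u.1 u.2.prod = base φ f := by
          rw [← hf, of_apply_eq_base]
        cases t with
        | cons v t' =>
          -- merge u into v on the right
          refine merge_apply SH SK n ih _ x hlen hmem heq s t' u v
            ⟨v.1, convList φ v.1 f u.2.length ++ v.2⟩ hst ?_ (by simp) ?_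
          · show of (φ := φ) v.1 (convList φ v.1 f u.2.length ++ v.2).prod = _
            rw [List.prod_append, map_mul, convList_prod φ v.1 f _ h0, of_apply_eq_base, hbase]
          · show ∀ g ∈ convList φ v.1 f u.2.length ++ v.2, g ∈ Sfam SH SK v.1
            intro g hg
            rcases List.mem_append.mp hg with h | h
            · exact convList_mem φ (hSf v.1) f _ g h
            · exact hmem v (hst ▸ List.mem_append_right _ (List.mem_cons_of_mem _
                (List.mem_cons_self))) g h
        | nil =>
          rcases List.eq_nil_or_concat s with rfl | ⟨s', v, rfl⟩
          · -- r = [u]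
            rw [hst] at heq ⊢
            simp only [List.map_cons, List.map_nil, List.prod_cons, List.prod_nil, mul_one,
              List.nil_append] at heq ⊢
            rw [hbase] at heq
            have hx : φ true f = x := by
              apply of_injective hφ true
              rw [of_apply_eq_base]
              exact heq
            exact ⟨convList φ true f u.2.length, by simp, convList_mem φ hSHF f _,
              by rw [convList_prod φ true f _ h0, hx]⟩
          · -- merge u into v on the left
            rw [List.concat_eq_append] at hst
            have hst' : (⟨false, gs⟩ : (b : Bool) × List (Hfam b)) :: rest
                = s' ++ v :: u :: [] := by
              rw [hst]; simp
            refine merge_apply SH SK n ih _ x hlen hmem heq s' [] v u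
              ⟨v.1, v.2 ++ convList φ v.1 f u.2.length⟩ hst' ?_ (by simp) ?_
            · show of (φ := φ) v.1 (v.2 ++ convList φ v.1 f u.2.length).prod = _
              rw [List.prod_append, map_mul, convList_prod φ v.1 f _ h0, of_apply_eq_base, hbase]
            · show ∀ g ∈ v.2 ++ convList φ v.1 f u.2.length, g ∈ Sfam SH SK v.1
              intro g hg
              rcases List.mem_append.mp hg with h | h
              · exact hmem v (by rw [hst']; simp) g h
              · exact convList_mem φ (hSf v.1) f _ g h
      · push_neg at hrange
        rcases find_split (fun (u v : (b : Bool) × List (Hfam b)) => u.1 ≠ v.1)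
            (⟨false, gs⟩ :: rest) with hch | ⟨a, u, v, bb, huv, hsp⟩
        · exact absurd heq (noway hφ _ x (by simp)
            (by
              intro u hu
              simp only [List.head?_cons, Option.mem_def, Option.some.injEq] at hu
              rw [← hu])
            hch hrange)
        · obtain ⟨ub, ul⟩ := u
          obtain ⟨vb, vl⟩ := v
          have hbv : ub = vb := not_not.mp huv
          subst hbv
          refine merge_apply SH SK n ih _ x hlen hmem heq a bb ⟨ub, ul⟩ ⟨ub, vl⟩
            ⟨ub, ul ++ vl⟩ hsp ?_ (by simp) ?_
          · show of (φ := φ) ub (ul ++ vl).prod = _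
            rw [List.prod_append, map_mul]
          · show ∀ g ∈ ul ++ vl, g ∈ Sfam SH SK ub
            intro g hg
            rcases List.mem_append.mp hg with h | h
            · exact hmem ⟨ub, ul⟩ (hsp ▸ List.mem_append_right _ (List.mem_cons_self)) g h
            · exact hmem ⟨ub, vl⟩ (hsp ▸ List.mem_append_right _
                (List.mem_cons_of_mem _ (List.mem_cons_self))) g h


lemma tosig (SH : Set (Hfam true)) (SK : Set (Hfam false)) :
    ∀ l : List (PushoutI φ),
    (∀ y ∈ l, y ∈ (of (φ := φ) true '' SH) ∪ (of (φ := φ) false '' SK)) →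
    ∃ r : List ((b : Bool) × List (Hfam b)), (∀ u ∈ r, ∀ g ∈ u.2, g ∈ Sfam SH SK u.1) ∧
      (r.map fun u => u.2.length).sum = l.length ∧
      (r.map fun u => of (φ := φ) u.1 u.2.prod).prod = l.prod := by
  intro l
  induction l with
  | nil => exact fun _ => ⟨[], by simp, by simp, by simp⟩
  | cons y t ih =>
    intro hy
    obtain ⟨r, h1, h2, h3⟩ := ih (fun z hz => hy z (List.mem_cons_of_mem _ hz))
    rcases hy y (List.mem_cons_self) with ⟨g, hg, rfl⟩ | ⟨g, hg, rfl⟩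
    · refine ⟨⟨true, [g]⟩ :: r, ?_, by simp [h2, Nat.add_comm], by simp [h3]⟩
      refine List.forall_mem_cons.mpr ⟨?_, h1⟩
      intro g' hg'
      have hg'' : g' = g := by simpa using hg'
      rw [hg'']
      exact hg
    · refine ⟨⟨false, [g]⟩ :: r, ?_, by simp [h2, Nat.add_comm], by simp [h3]⟩
      refine List.forall_mem_cons.mpr ⟨?_, h1⟩
      intro g' hg'
      have hg'' : g' = g := by simpa using hg'
      rw [hg'']
      exact hg

end Aux


/-- `Hfam true` plays the role of `H`, `Hfam false` the role of `K`, `F` the amalgamated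
subgroup, and `Monoid.PushoutI φ` (with both `φ i` injective) is the amalgamated free
product `G = H *_F K`.  If `S_H` generates `H` and contains the copy of `F` in `H`, is
symmetric, and likewise for `S_K`, then `H` is isometrically embedded in `G` with respect
to the word metrics for `S_H` and `S_G = S_H ∪ S_K`. -/
theorem stmt_6 {F : Type*} [Group F] {Hfam : Bool → Type*} [∀ i, Group (Hfam i)]
    (φ : ∀ i, F →* Hfam i) (hφ : ∀ i, Function.Injective (φ i))
    (SH : Set (Hfam true)) (SK : Set (Hfam false))
    (hSHsymm : ∀ s ∈ SH, s⁻¹ ∈ SH) (hSKsymm : ∀ s ∈ SK, s⁻¹ ∈ SK)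
    (hSHgen : Subgroup.closure SH = ⊤) (hSKgen : Subgroup.closure SK = ⊤)
    (hSHF : Set.range (φ true) ⊆ SH) (hSKF : Set.range (φ false) ⊆ SK)
    (h₁ h₂ : Hfam true) :
    wordDist SH h₁ h₂ =
      wordDist ((of (φ := φ) true '' SH) ∪ (of (φ := φ) false '' SK))
        (of (φ := φ) true h₁) (of (φ := φ) true h₂) := by
  classical
  obtain ⟨l0, hl0mem, hl0prod⟩ :
      ∃ l : List (Hfam true), (∀ y ∈ l, y ∈ SH) ∧ l.prod = h₁⁻¹ * h₂ := by
    have hsub : SH⁻¹ ⊆ SH := by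
      intro s hs
      rw [Set.mem_inv] at hs
      simpa using hSHsymm _ hs
    have hmem : h₁⁻¹ * h₂ ∈ Submonoid.closure SH := by
      have h1 : h₁⁻¹ * h₂ ∈ Subgroup.closure SH := by rw [hSHgen]; trivial
      have h2 : h₁⁻¹ * h₂ ∈ (Subgroup.closure SH).toSubmonoid := h1
      rw [Subgroup.closure_toSubmonoid, Set.union_eq_self_of_subset_right hsub] at h2
      exact h2
    exact Submonoid.exists_list_of_mem_closure hmem
  set A : Set ℕ := {k : ℕ | ∃ l : List (Hfam true), l.length = k ∧
    (∀ x ∈ l, x ∈ SH) ∧ l.prod = h₁⁻¹ * h₂} with hA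
  set B : Set ℕ := {k : ℕ | ∃ l : List (PushoutI φ), l.length = k ∧
    (∀ x ∈ l, x ∈ (of (φ := φ) true '' SH) ∪ (of (φ := φ) false '' SK)) ∧
    l.prod = (of (φ := φ) true h₁)⁻¹ * (of (φ := φ) true h₂)} with hB
  have hAB : ∀ k ∈ A, k ∈ B := by
    rintro k ⟨l, rfl, hmem, hprod⟩
    refine ⟨l.map (of (φ := φ) true), by simp, ?_, ?_⟩
    · intro y hy
      rw [List.mem_map] at hy
      rcases hy with ⟨g, hg, rfl⟩
      exact Or.inl ⟨g, hmem g hg, rfl⟩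
    · rw [← map_list_prod, hprod, map_mul, map_inv]
  have hBA : ∀ k ∈ B, k ∈ A := by
    rintro k ⟨l, rfl, hmem, hprod⟩
    obtain ⟨r, h1, h2, h3⟩ := tosig (φ := φ) SH SK l hmem
    obtain ⟨l', hl1, hl2, hl3⟩ := key (φ := φ) SH SK hφ hSHF hSKF r.length r (h₁⁻¹ * h₂)
      le_rfl h1 (by rw [h3, hprod, map_mul, map_inv])
    exact ⟨l', by rw [hl1, h2], hl2, hl3⟩
  have hAne : A.Nonempty := ⟨l0.length, l0, rfl, hl0mem, hl0prod⟩
  have hBne : B.Nonempty := ⟨l0.length, hAB _ ⟨l0, rfl, hl0mem, hl0prod⟩⟩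
  have : sInf A = sInf B :=
    le_antisymm (Nat.sInf_le (hBA _ (Nat.sInf_mem hBne))) (Nat.sInf_le (hAB _ (Nat.sInf_mem hAne)))
  exact this
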